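/- Let Ψ(R, R_d) = ½ tr(I − R_dᵀ R) and e_R = ½ (R_dᵀ R − Rᵀ R_d)^∨. Then ‖e_R‖² = Ψ(R, R_d)(2 − Ψ(R, R_d)) for all R, R_d ∈ SO(3). -/

import Mathlib

open Matrix
open scoped Matrix

noncomputable section

attribute [local instance] Matrix.normedAddCommGroup Matrix.normedSpace

/-- The hat map `ℝ³ → so(3)`, sending `x` to the skew matrix with `hat x *ᵥ y = x ×₃ y`. -/
def hat (x : Fin 3 → ℝ) : Matrix (Fin 3) (Fin 3) ℝ :=
  !![0, -x 2, x 1; x 2, 0, -x 0; -x 1, x 0, 0]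

/-- The vee map, inverse of the hat map on skew-symmetric matrices. -/
def vee (S : Matrix (Fin 3) (Fin 3) ℝ) : Fin 3 → ℝ := ![S 2 1, S 0 2, S 1 0]

/-- `SO(3)`: rotation matrices. -/
def SO3 : Set (Matrix (Fin 3) (Fin 3) ℝ) := {R | Rᵀ * R = 1 ∧ R.det = 1}

/-- Euclidean inner product on `ℝ³`. -/
def dot (x y : Fin 3 → ℝ) : ℝ := ∑ i, x i * y i

/-- Euclidean norm on `ℝ³`. -/
def norm3 (x : Fin 3 → ℝ) : ℝ := Real.sqrt (dot x x)

/-- Attitude error function on `SO(3) × SO(3)`. -/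
def Psi (R Rd : Matrix (Fin 3) (Fin 3) ℝ) : ℝ := (1/2 : ℝ) * (1 - Rdᵀ * R).trace

/-- Attitude error vector. -/
def eR (R Rd : Matrix (Fin 3) (Fin 3) ℝ) : Fin 3 → ℝ := (1/2 : ℝ) • vee (Rdᵀ * R - Rᵀ * Rd)

/-- `‖e_R‖² = Ψ(R,R_d)(2 − Ψ(R,R_d))`. -/
theorem eR_norm_sq (R Rd : Matrix (Fin 3) (Fin 3) ℝ) (hR : R ∈ SO3) (hRd : Rd ∈ SO3) :
    norm3 (eR R Rd) ^ 2 = Psi R Rd * (2 - Psi R Rd) := by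
  obtain ⟨hR1, hR2⟩ := hR
  obtain ⟨hd1, hd2⟩ := hRd
  set Q : Matrix (Fin 3) (Fin 3) ℝ := Rdᵀ * R with hQ
  have hQo : Qᵀ * Q = 1 := by
    have h1 : Rd * Rdᵀ = 1 := mul_eq_one_comm.mp hd1
    calc Qᵀ * Q = Rᵀ * (Rd * Rdᵀ) * R := by
          simp [hQ, Matrix.transpose_mul, Matrix.mul_assoc]
      _ = 1 := by rw [h1]; simp [hR1]
  have hQQt : Q * Qᵀ = 1 := mul_eq_one_comm.mp hQo
  have hdet : Q.det = 1 := by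
    simp [hQ, Matrix.det_mul, Matrix.det_transpose, hR2, hd2]
  have hadj : Q.adjugate = Qᵀ := by
    calc Q.adjugate = (Qᵀ * Q) * Q.adjugate := by rw [hQo, one_mul]
      _ = Qᵀ * (Q.det • (1 : Matrix (Fin 3) (Fin 3) ℝ)) := by
          rw [Matrix.mul_assoc, Matrix.mul_adjugate]
      _ = Qᵀ := by rw [hdet, one_smul, mul_one]
  have entry : ∀ i j : Fin 3, Q.adjugate i j = Qᵀ i j := fun i j => by rw [hadj]
  have a0 := entry 0 0
  have a1 := entry 1 1
  have a2 := entry 2 2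
  simp only [Matrix.adjugate_fin_three, Matrix.transpose_apply, Matrix.cons_val',
    Matrix.cons_val_zero, Matrix.cons_val_one, Matrix.head_cons, Matrix.empty_val',
    Matrix.cons_val_fin_one, Matrix.head_fin_const, Matrix.cons_val_two, Matrix.tail_cons,
    Matrix.of_apply] at a0 a1 a2
  have oentry : ∀ i j : Fin 3, (Qᵀ * Q) i j = (1 : Matrix (Fin 3) (Fin 3) ℝ) i j :=
    fun i j => by rw [hQo]
  have o0 := oentry 0 0
  have o1 := oentry 1 1
  have o2 := oentry 2 2
  simp only [Matrix.mul_apply, Fin.sum_univ_three, Matrix.transpose_apply,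
    Matrix.one_apply_eq] at o0 o1 o2
  have hRtRd : Rᵀ * Rd = Qᵀ := by simp [hQ, Matrix.transpose_mul]
  have hPsi : Psi R Rd = (1/2 : ℝ) * (3 - (Q 0 0 + Q 1 1 + Q 2 2)) := by
    rw [Psi, Matrix.trace_sub, Matrix.trace_one]
    simp [hQ, Matrix.trace, Matrix.diag, Fin.sum_univ_three]
    try ring
  have heR : eR R Rd = ![(1/2 : ℝ) * (Q 2 1 - Q 1 2), (1/2 : ℝ) * (Q 0 2 - Q 2 0),
      (1/2 : ℝ) * (Q 1 0 - Q 0 1)] := by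
    funext i
    fin_cases i <;>
      simp [eR, vee, hRtRd, Matrix.sub_apply, Matrix.transpose_apply] <;> rfl
  have hnn : ∀ x : Fin 3 → ℝ, 0 ≤ dot x x := fun x =>
    Finset.sum_nonneg fun i _ => mul_self_nonneg _
  rw [heR, hPsi, norm3, Real.sq_sqrt (hnn _)]
  simp only [dot, Fin.sum_univ_three, Matrix.cons_val_zero, Matrix.cons_val_one,
    Matrix.head_cons, Matrix.cons_val_two, Matrix.tail_cons]
  linear_combination (o0 + o1 + o2) / 4 + (a0 + a1 + a2) / 2
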